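/- Suppose the measurement operator satisfies (2r, δ)-RIP, X* ∈ ℝ^{n×n} is symmetric positive semidefinite with best rank-r approximation X_r* (the truncated spectral decomposition keeping the r largest eigenvalues), and U ∈ ℝ^{n×r} satisfies the first-order stationarity equation Σ_{i=1}^m ⟨A_i, U·Uᵀ − X*⟩·A_i·U = 0. Let P ∈ ℝ^{n×n} be the orthogonal projection onto the column space of U. Then ‖U·Uᵀ − P·X_r*‖_F ≤ δ·‖U·Uᵀ − X_r*‖_F + ‖(X* − X_r*)·P‖_F + δ·‖X* − X_r*‖_*, where ‖·‖_* denotes the nuclear norm (the sum of the singular values). -/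

import Mathlib

open Matrix MeasureTheory BigOperators

/-- Matrix inner product `⟨A, X⟩ = trace(Aᵀ X)`. -/
noncomputable def mip {n : ℕ} (A X : Matrix (Fin n) (Fin n) ℝ) : ℝ :=
  (Aᵀ * X).trace

/-- Frobenius norm of a real matrix. -/
noncomputable def frob {n₁ n₂ : ℕ} (M : Matrix (Fin n₁) (Fin n₂) ℝ) : ℝ :=
  Real.sqrt (∑ i, ∑ j, (M i j) ^ 2)

/-- `(k, δ)`-restricted isometry property of the measurement operator `A`. -/
def RIP {n m : ℕ} (A : Fin m → Matrix (Fin n) (Fin n) ℝ) (k : ℕ) (δ : ℝ) : Prop :=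
  ∀ X : Matrix (Fin n) (Fin n) ℝ, X.rank ≤ k →
    (1 - δ) * frob X ^ 2 ≤ (1 / (m : ℝ)) * ∑ i, mip (A i) X ^ 2 ∧
    (1 / (m : ℝ)) * ∑ i, mip (A i) X ^ 2 ≤ (1 + δ) * frob X ^ 2

/-- Objective `f(U) = ∑ i, (⟨A i, U Uᵀ⟩ - y i)²`. -/
noncomputable def fobj {n m r : ℕ} (A : Fin m → Matrix (Fin n) (Fin n) ℝ) (y : Fin m → ℝ)
    (U : Matrix (Fin n) (Fin r) ℝ) : ℝ :=
  ∑ i, (mip (A i) (U * Uᵀ) - y i) ^ 2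

/-- Nuclear norm: sum of the singular values (square roots of eigenvalues of `MᵀM = Mᴴ M`). -/
noncomputable def nuclearNorm {n : ℕ} (M : Matrix (Fin n) (Fin n) ℝ) : ℝ :=
  ∑ i, Real.sqrt ((Matrix.isHermitian_conjTranspose_mul_self M).eigenvalues i)

section helpers

variable {n n₁ n₂ : ℕ}

lemma frob_nonneg (M : Matrix (Fin n₁) (Fin n₂) ℝ) : 0 ≤ frob M := Real.sqrt_nonneg _

lemma frob_sq (M : Matrix (Fin n₁) (Fin n₂) ℝ) : frob M ^ 2 = ∑ i, ∑ j, (M i j) ^ 2 :=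
  Real.sq_sqrt (by positivity)

lemma frob_transpose (M : Matrix (Fin n₁) (Fin n₂) ℝ) : frob Mᵀ = frob M := by
  rw [frob, frob, Finset.sum_comm]
  rfl

lemma frob_eq_zero {M : Matrix (Fin n₁) (Fin n₂) ℝ} (h : frob M = 0) : M = 0 := by
  have h2 : (∑ i, ∑ j, (M i j) ^ 2) = 0 := by
    have := frob_sq M
    rw [h] at this
    linarith [this.symm]
  ext i j
  have hi : ∑ j, (M i j) ^ 2 = 0 := by
    have := (Finset.sum_eq_zero_iff_of_nonneg (fun i _ => by positivity)).mp h2 i (Finset.mem_univ i)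
    exact this
  have := (Finset.sum_eq_zero_iff_of_nonneg (fun j _ => by positivity)).mp hi j (Finset.mem_univ j)
  simpa using pow_eq_zero_iff (n := 2) (by norm_num) |>.mp this

lemma mip_eq_sum (A X : Matrix (Fin n) (Fin n) ℝ) : mip A X = ∑ i, ∑ j, A i j * X i j := by
  rw [mip, Matrix.trace]
  simp only [Matrix.diag, Matrix.mul_apply, Matrix.transpose_apply]
  rw [Finset.sum_comm]

lemma mip_self (X : Matrix (Fin n) (Fin n) ℝ) : mip X X = frob X ^ 2 := by
  rw [mip_eq_sum, frob_sq]
  simp [sq]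

lemma abs_mip_le (X Y : Matrix (Fin n) (Fin n) ℝ) : |mip X Y| ≤ frob X * frob Y := by
  rw [mip_eq_sum]
  have key : (∑ i, ∑ j, X i j * Y i j) ^ 2 ≤ (∑ i, ∑ j, (X i j)^2) * (∑ i, ∑ j, (Y i j)^2) := by
    have := Finset.sum_mul_sq_le_sq_mul_sq (Finset.univ : Finset (Fin n × Fin n))
      (fun p => X p.1 p.2) (fun p => Y p.1 p.2)
    simpa only [Fintype.sum_prod_type] using this
  have h1 : |∑ i, ∑ j, X i j * Y i j| = Real.sqrt ((∑ i, ∑ j, X i j * Y i j) ^ 2) :=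
    (Real.sqrt_sq_eq_abs _).symm
  rw [h1, frob, frob, ← Real.sqrt_mul (by positivity)]
  exact Real.sqrt_le_sqrt key

end helpers

section bilin

variable {n : ℕ}

lemma mip_add_right (A X Y : Matrix (Fin n) (Fin n) ℝ) :
    mip A (X + Y) = mip A X + mip A Y := by
  simp [mip, Matrix.mul_add]

lemma mip_sub_right (A X Y : Matrix (Fin n) (Fin n) ℝ) :
    mip A (X - Y) = mip A X - mip A Y := by
  simp [mip, Matrix.mul_sub]

lemma mip_smul_right (A X : Matrix (Fin n) (Fin n) ℝ) (c : ℝ) :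
    mip A (c • X) = c * mip A X := by
  simp [mip, Matrix.mul_smul]

lemma mip_sum_right {ι : Type*} (s : Finset ι) (A : Matrix (Fin n) (Fin n) ℝ)
    (f : ι → Matrix (Fin n) (Fin n) ℝ) :
    mip A (∑ j ∈ s, f j) = ∑ j ∈ s, mip A (f j) := by
  simp [mip, Matrix.mul_sum]

lemma rip_bilinear {n m r : ℕ} {A : Fin m → Matrix (Fin n) (Fin n) ℝ} {δ : ℝ}
    (hRIP : RIP A (2 * r) δ)
    (X Y : Matrix (Fin n) (Fin n) ℝ)
    (hrank : ∀ a b : ℝ, (a • X + b • Y).rank ≤ 2 * r) :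
    |mip X Y - (1 / (m : ℝ)) * ∑ i, mip (A i) X * mip (A i) Y| ≤ δ * frob X * frob Y := by
  by_cases hX : frob X = 0
  · have : X = 0 := frob_eq_zero hX
    subst this
    simp [mip, hX]
  by_cases hY : frob Y = 0
  · have : Y = 0 := frob_eq_zero hY
    subst this
    simp [mip, hY]
  set s := frob X with hs
  set t := frob Y with ht
  have hs0 : 0 < s := lt_of_le_of_ne (frob_nonneg X) (Ne.symm hX)
  have ht0 : 0 < t := lt_of_le_of_ne (frob_nonneg Y) (Ne.symm hY)
  set Zp := t • X + s • Y with hZp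
  set Zm := t • X + (-s) • Y with hZm
  have hp := hRIP Zp (hrank t s)
  have hq := hRIP Zm (hrank t (-s))
  -- expansions
  have hmipZp : ∀ B : Matrix (Fin n) (Fin n) ℝ, mip B Zp = t * mip B X + s * mip B Y := by
    intro B; rw [hZp, mip_add_right, mip_smul_right, mip_smul_right]
  have hmipZm : ∀ B : Matrix (Fin n) (Fin n) ℝ, mip B Zm = t * mip B X - s * mip B Y := by
    intro B; rw [hZm, mip_add_right, mip_smul_right, mip_smul_right]; ring
  have hfXY : ∀ (a b : ℝ), frob (a • X + b • Y) ^ 2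
      = a^2 * frob X ^2 + 2*a*b * mip X Y + b^2 * frob Y ^2 := by
    intro a b
    rw [frob_sq, frob_sq, frob_sq, mip_eq_sum]
    have : ∀ i j, ((a • X + b • Y) i j)^2
        = a^2 * (X i j)^2 + 2*a*b*(X i j * Y i j) + b^2 * (Y i j)^2 := by
      intro i j
      simp only [Matrix.add_apply, Matrix.smul_apply, smul_eq_mul]
      ring
    simp only [this, Finset.sum_add_distrib, ← Finset.mul_sum]
  have hfp : frob Zp ^ 2 = 2 * s^2 * t^2 + 2*t*s * mip X Y := by
    rw [hZp, hfXY]; ring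
  have hfm : frob Zm ^ 2 = 2 * s^2 * t^2 - 2*t*s * mip X Y := by
    rw [hZm, hfXY]; ring
  have hSp : (∑ i, mip (A i) Zp ^ 2)
      = t^2 * (∑ i, mip (A i) X ^2) + 2*t*s*(∑ i, mip (A i) X * mip (A i) Y)
        + s^2 * (∑ i, mip (A i) Y ^2) := by
    have : ∀ i : Fin m, mip (A i) Zp ^ 2
        = t^2 * mip (A i) X ^2 + 2*t*s*(mip (A i) X * mip (A i) Y) + s^2 * mip (A i) Y^2 := by
      intro i; rw [hmipZp]; ring
    simp only [this, Finset.sum_add_distrib, ← Finset.mul_sum]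
  have hSm : (∑ i, mip (A i) Zm ^ 2)
      = t^2 * (∑ i, mip (A i) X ^2) - 2*t*s*(∑ i, mip (A i) X * mip (A i) Y)
        + s^2 * (∑ i, mip (A i) Y ^2) := by
    have : ∀ i : Fin m, mip (A i) Zm ^ 2
        = t^2 * mip (A i) X ^2 - 2*t*s*(mip (A i) X * mip (A i) Y) + s^2 * mip (A i) Y^2 := by
      intro i; rw [hmipZm]; ring
    simp only [this, Finset.sum_add_distrib, Finset.sum_sub_distrib, ← Finset.mul_sum]
  obtain ⟨hp1, hp2⟩ := hp
  obtain ⟨hq1, hq2⟩ := hq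
  rw [hSp] at hp1 hp2
  rw [hSm] at hq1 hq2
  rw [hfp] at hp1 hp2
  rw [hfm] at hq1 hq2
  set B := (1 / (m : ℝ)) * ∑ i, mip (A i) X * mip (A i) Y with hB
  set I := mip X Y with hI
  rw [abs_le]
  constructor
  · -- -(δ s t) ≤ I - B
    nlinarith [mul_pos hs0 ht0, mul_pos (mul_pos hs0 hs0) (mul_pos ht0 ht0)]
  · nlinarith [mul_pos hs0 ht0, mul_pos (mul_pos hs0 hs0) (mul_pos ht0 ht0)]

end bilin

section rank

lemma matrix_rank_add_le {n : ℕ} (X Y : Matrix (Fin n) (Fin n) ℝ) :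
    (X + Y).rank ≤ X.rank + Y.rank := by
  rw [Matrix.rank, Matrix.rank, Matrix.rank]
  have hsub : LinearMap.range (X + Y).mulVecLin ≤
      LinearMap.range X.mulVecLin ⊔ LinearMap.range Y.mulVecLin := by
    rintro v ⟨x, rfl⟩
    rw [Matrix.mulVecLin_add]
    exact Submodule.add_mem_sup ⟨x, rfl⟩ ⟨x, rfl⟩
  calc Module.finrank ℝ ↥(LinearMap.range (X + Y).mulVecLin)
      ≤ Module.finrank ℝ ↥(LinearMap.range X.mulVecLin ⊔ LinearMap.range Y.mulVecLin) :=
        Submodule.finrank_mono hsub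
    _ ≤ _ := Submodule.finrank_add_le_finrank_add_finrank _ _

lemma rank_diag_trunc_le {n r : ℕ} (lam : Fin n → ℝ) :
    (Matrix.diagonal (fun i : Fin n => if (i : ℕ) < r then lam i else 0)).rank ≤ r := by
  classical
  rw [Matrix.rank_diagonal]
  have : Function.Injective
      (fun i : {i : Fin n // (if (i : ℕ) < r then lam i else 0) ≠ 0} =>
        (⟨(i : Fin n), by
          by_contra hc
          push_neg at hc
          exact i.2 (by simp [Nat.not_lt.mpr hc])⟩ : Fin r)) := by
    intro a b hab
    ext
    simpa [Fin.ext_iff] using hab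
  simpa using Fintype.card_le_of_injective _ this

end rank

section nuclear

lemma nuclearNorm_eq_trace {n : ℕ} {M : Matrix (Fin n) (Fin n) ℝ} (hM : M.PosSemidef) :
    nuclearNorm M = M.trace := by
  classical
  have h1 : M.IsHermitian := hM.1
  have hH := Matrix.isHermitian_conjTranspose_mul_self M
  have hsq : Mᴴ * M = cfc (fun x : ℝ => x ^ 2) M := by
    rw [cfc_pow_id M 2 h1.isSelfAdjoint, pow_two, h1.eq]
  have hroots : Multiset.map hH.eigenvalues Finset.univ.val
      = Multiset.map (fun i => h1.eigenvalues i ^ 2) Finset.univ.val := by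
    have e1 := hH.roots_charpoly_eq_eigenvalues
    have e2 : (Mᴴ * M).charpoly = (cfc (fun x : ℝ => x ^ 2) M).charpoly := by rw [hsq]
    rw [e2, h1.charpoly_cfc_eq, Polynomial.roots_prod _ _ (Finset.prod_ne_zero_iff.mpr fun i _ => Polynomial.X_sub_C_ne_zero _)] at e1
    simp only [Polynomial.roots_X_sub_C, Multiset.bind_singleton, RCLike.ofReal_real_eq_id,
      Function.comp_id, id] at e1
    exact e1.symm
  have hs := congrArg (fun s => (Multiset.map Real.sqrt s).sum) hroots
  simp only [Multiset.map_map, Function.comp_def] at hs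
  rw [nuclearNorm]
  change ∑ i, Real.sqrt (hH.eigenvalues i) = _
  rw [h1.trace_eq_sum_eigenvalues]
  have hs' : ∑ i, Real.sqrt (hH.eigenvalues i) = ∑ i, Real.sqrt (h1.eigenvalues i ^ 2) := hs
  rw [hs']
  refine Finset.sum_congr rfl fun i _ => ?_
  rw [Real.sqrt_sq (hM.eigenvalues_nonneg i)]
  rfl

end nuclear

lemma mip_transp {n : ℕ} (X Z : Matrix (Fin n) (Fin n) ℝ) (hZ : Zᵀ = Z) :
    mip Xᵀ Z = mip X Z := by
  rw [mip, mip, Matrix.transpose_transpose]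
  rw [Matrix.trace_mul_comm, ← Matrix.trace_transpose, Matrix.transpose_mul, hZ,
    Matrix.trace_mul_comm]

set_option maxHeartbeats 1600000 in
/-- First-order condition in the approximately-low-rank case. -/
theorem inexact_first_order_condition {n m r : ℕ} (hn : 0 < n) (hm : 0 < m) (hr : 0 < r)
    (A : Fin m → Matrix (Fin n) (Fin n) ℝ)
    (δ : ℝ) (hRIP : RIP A (2 * r) δ)
    (Q : Matrix (Fin n) (Fin n) ℝ) (hQ : Qᵀ * Q = 1)
    (lam : Fin n → ℝ) (hlam0 : ∀ i, 0 ≤ lam i)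
    (hlamdec : ∀ i j : Fin n, i ≤ j → lam j ≤ lam i)
    (Xstar Xr : Matrix (Fin n) (Fin n) ℝ)
    (hX : Xstar = Q * Matrix.diagonal lam * Qᵀ)
    (hXr : Xr = Q * Matrix.diagonal (fun i : Fin n => if (i : ℕ) < r then lam i else 0) * Qᵀ)
    (U : Matrix (Fin n) (Fin r) ℝ)
    (hstat : ∑ i, mip (A i) (U * Uᵀ - Xstar) • (A i * U) = 0)
    (P : Matrix (Fin n) (Fin n) ℝ) (hPsym : Pᵀ = P) (hPidem : P * P = P)
    (hPrange : LinearMap.range P.mulVecLin = LinearMap.range U.mulVecLin) :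
    frob (U * Uᵀ - P * Xr) ≤
      δ * frob (U * Uᵀ - Xr) + frob ((Xstar - Xr) * P) + δ * nuclearNorm (Xstar - Xr) := by
  classical
  set E := U * Uᵀ - P * Xr with hE
  set Y := U * Uᵀ - Xr with hY
  set d : Fin n → ℝ := fun i => if (i : ℕ) < r then 0 else lam i with hd
  have hd0 : ∀ j, 0 ≤ d j := by
    intro j; rw [hd]; dsimp only; split
    · exact le_refl 0
    · exact hlam0 j
  -- symmetry facts
  have hdiagT : ∀ f : Fin n → ℝ, (Q * Matrix.diagonal f * Qᵀ)ᵀ = Q * Matrix.diagonal f * Qᵀ := by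
    intro f
    rw [Matrix.transpose_mul, Matrix.transpose_mul, Matrix.transpose_transpose,
      Matrix.diagonal_transpose, Matrix.mul_assoc]
  have hXs_sym : Xstarᵀ = Xstar := by rw [hX]; exact hdiagT lam
  have hXr_sym : Xrᵀ = Xr := by rw [hXr]; exact hdiagT _
  have hM_eq : Xstar - Xr = Q * Matrix.diagonal d * Qᵀ := by
    rw [hX, hXr, ← Matrix.sub_mul, ← Matrix.mul_sub]
    congr 2
    rw [Matrix.diagonal_sub]
    refine congrArg Matrix.diagonal (funext fun i => ?_)
    simp only [hd, Pi.sub_apply]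
    split <;> simp
  have hM_sym : (Xstar - Xr)ᵀ = Xstar - Xr := by rw [hM_eq]; exact hdiagT d
  -- P fixes range of U
  have hPfix : ∀ x : Fin r → ℝ, P.mulVec (U.mulVec x) = U.mulVec x := by
    intro x
    have hx : U.mulVec x ∈ LinearMap.range U.mulVecLin := ⟨x, rfl⟩
    rw [← hPrange] at hx
    obtain ⟨z, hz⟩ := hx
    rw [Matrix.mulVecLin_apply] at hz
    rw [← hz, Matrix.mulVec_mulVec, hPidem]
  have hPU : P * U = U := by
    ext i k
    have := congrFun (hPfix (Pi.single k 1)) i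
    simp only [Matrix.mulVec, dotProduct, Pi.single_apply, mul_ite, mul_one, mul_zero,
      Finset.sum_ite_eq', Finset.mem_univ, if_true] at this
    simpa [Matrix.mul_apply] using this
  -- P = U * C
  have hcol : ∀ j : Fin n, ∃ v : Fin r → ℝ, U.mulVec v = fun i => P i j := by
    intro j
    have hx : (fun i => P i j) ∈ LinearMap.range P.mulVecLin := by
      refine ⟨Pi.single j 1, ?_⟩
      rw [Matrix.mulVecLin_apply]
      funext i
      simp [Matrix.mulVec_single]
    rw [hPrange] at hx
    obtain ⟨v, hv⟩ := hx
    exact ⟨v, by rw [← hv, Matrix.mulVecLin_apply]⟩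
  choose Cv hCv using hcol
  set C : Matrix (Fin r) (Fin n) ℝ := (Matrix.of fun k j => Cv j k) with hC
  have hPC : P = U * C := by
    ext i j
    have := (congrFun (hCv j) i).symm
    simpa [Matrix.mul_apply, Matrix.mulVec, dotProduct, hC] using this
  set W : Matrix (Fin r) (Fin n) ℝ := Uᵀ - C * Xr with hW
  have hEUW : E = U * W := by
    rw [hE, hW, Matrix.mul_sub, hPC, Matrix.mul_assoc]
  have hET : Eᵀ = U * Uᵀ - Xr * P := by
    rw [hE, Matrix.transpose_sub, Matrix.transpose_mul, Matrix.transpose_mul,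
      Matrix.transpose_transpose, hPsym, hXr_sym]
  have hETW : Eᵀ = Wᵀ * Uᵀ := by rw [hEUW, Matrix.transpose_mul]
  have hUUP : U * Uᵀ * P = U * Uᵀ := by
    rw [Matrix.mul_assoc]
    congr 1
    rw [← hPsym, ← Matrix.transpose_mul, hPU]
  have hETP : Eᵀ * P = Eᵀ := by
    rw [hET, Matrix.sub_mul, hUUP, Matrix.mul_assoc, hPidem]
  -- outer products of columns of Q
  set Qc : Fin n → Matrix (Fin n) (Fin 1) ℝ := fun j => Matrix.of (fun i _ => Q i j) with hQc
  set S : Fin n → Matrix (Fin n) (Fin n) ℝ := fun j => Qc j * (Qc j)ᵀ with hS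
  have hSapp : ∀ j a b, S j a b = Q a j * Q b j := by
    intro j a b
    simp [hS, hQc, Matrix.mul_apply]
  have hQcolsq : ∀ j, ∑ a, Q a j ^ 2 = 1 := by
    intro j
    have := congrFun (congrFun hQ j) j
    simp only [Matrix.mul_apply, Matrix.transpose_apply, Matrix.one_apply_eq] at this
    rw [← this]
    exact Finset.sum_congr rfl fun a _ => (sq (Q a j)).symm ▸ rfl
  have hfrobS : ∀ j, frob (S j) = 1 := by
    intro j
    have h1 : ∑ a, ∑ b, (S j a b) ^ 2 = 1 := by
      have : ∀ a b, (S j a b) ^ 2 = (Q a j ^ 2) * (Q b j ^ 2) := by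
        intro a b; rw [hSapp]; ring
      simp only [this, ← Finset.mul_sum, ← Finset.sum_mul, hQcolsq, one_mul]
    rw [frob, h1, Real.sqrt_one]
  have hrankS1 : ∀ j (N : Matrix (Fin 1) (Fin n) ℝ), (Qc j * N).rank ≤ 1 := by
    intro j N
    calc (Qc j * N).rank ≤ (Qc j).rank := Matrix.rank_mul_le_left _ _
      _ ≤ 1 := by simpa using Matrix.rank_le_card_width (Qc j)
  have hrankU : ∀ N : Matrix (Fin r) (Fin n) ℝ, (U * N).rank ≤ r := by
    intro N
    calc (U * N).rank ≤ U.rank := Matrix.rank_mul_le_left _ _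
      _ ≤ r := by simpa using Matrix.rank_le_card_width U
  have hrankUT : ∀ N : Matrix (Fin n) (Fin r) ℝ, (N * Uᵀ).rank ≤ r := by
    intro N
    calc (N * Uᵀ).rank ≤ (Uᵀ).rank := Matrix.rank_mul_le_right _ _
      _ = U.rank := Matrix.rank_transpose U
      _ ≤ r := by simpa using Matrix.rank_le_card_width U
  have hrankXr : ∀ N : Matrix (Fin n) (Fin n) ℝ, (Xr * N).rank ≤ r := by
    intro N
    calc (Xr * N).rank ≤ Xr.rank := Matrix.rank_mul_le_left _ _
      _ ≤ (Q * Matrix.diagonal (fun i : Fin n => if (i : ℕ) < r then lam i else 0)).rank := by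
          rw [hXr]; exact Matrix.rank_mul_le_left _ _
      _ ≤ (Matrix.diagonal (fun i : Fin n => if (i : ℕ) < r then lam i else 0)).rank :=
          Matrix.rank_mul_le_right _ _
      _ ≤ r := rank_diag_trunc_le lam
  -- δ is nonnegative
  have hδ0 : 0 ≤ δ := by
    have hrk : (S ⟨0, hn⟩).rank ≤ 2 * r := by
      refine le_trans (hrankS1 _ _) ?_
      omega
    obtain ⟨h1, h2⟩ := hRIP (S ⟨0, hn⟩) hrk
    rw [hfrobS] at h1 h2
    nlinarith [le_trans h1 h2]
  -- stationarity reformulated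
  have hstat2 : ∀ V : Matrix (Fin n) (Fin r) ℝ,
      (∑ i, mip (A i) (V * Uᵀ) * mip (A i) (U * Uᵀ - Xstar)) = 0 := by
    intro V
    have h1 : ∀ i : Fin m, mip (A i) (V * Uᵀ) = ((A i * U)ᵀ * V).trace := by
      intro i
      rw [mip, Matrix.transpose_mul, Matrix.mul_assoc, Matrix.trace_mul_comm,
        Matrix.mul_assoc V, Matrix.trace_mul_comm, Matrix.mul_assoc]
    have h2 : (∑ i, ((A i * U)ᵀ * V).trace * mip (A i) (U * Uᵀ - Xstar))
        = (((∑ i, mip (A i) (U * Uᵀ - Xstar) • (A i * U))ᵀ) * V).trace := by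
      rw [Matrix.transpose_sum, Matrix.sum_mul, Matrix.trace_sum]
      refine Finset.sum_congr rfl fun i _ => ?_
      rw [Matrix.transpose_smul, Matrix.smul_mul, Matrix.trace_smul, smul_eq_mul]
      ring
    simp only [h1]
    rw [h2, hstat]
    simp
  have hzero : ∑ i, mip (A i) Eᵀ * mip (A i) (U * Uᵀ - Xstar) = 0 := by
    have := hstat2 Wᵀ
    rw [← hETW] at this
    exact this
  -- rank hypotheses for the RIP bilinear bounds
  have hrank1 : ∀ a b : ℝ, (a • Eᵀ + b • Y).rank ≤ 2 * r := by
    intro a b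
    have hid : a • Eᵀ + b • Y = U * ((a + b) • Uᵀ) + Xr * (-(a • P + b • 1)) := by
      rw [hET, hY]
      simp only [Matrix.mul_smul, Matrix.mul_add, Matrix.mul_neg, Matrix.mul_one, add_smul,
        smul_sub, neg_add]
      abel
    rw [hid]
    calc (U * ((a + b) • Uᵀ) + Xr * (-(a • P + b • 1))).rank
        ≤ (U * ((a + b) • Uᵀ)).rank + (Xr * (-(a • P + b • 1))).rank :=
          matrix_rank_add_le _ _
      _ ≤ r + r := add_le_add (hrankU _) (hrankXr _)
      _ = 2 * r := by ring
  have hrank2 : ∀ j : Fin n, ∀ a b : ℝ, (a • Eᵀ + b • S j).rank ≤ 2 * r := by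
    intro j a b
    have hid : a • Eᵀ + b • S j = (a • Wᵀ) * Uᵀ + Qc j * (b • (Qc j)ᵀ) := by
      rw [hETW, hS]
      simp only [Matrix.smul_mul, Matrix.mul_smul]
    rw [hid]
    calc ((a • Wᵀ) * Uᵀ + Qc j * (b • (Qc j)ᵀ)).rank
        ≤ ((a • Wᵀ) * Uᵀ).rank + (Qc j * (b • (Qc j)ᵀ)).rank := matrix_rank_add_le _ _
      _ ≤ r + 1 := add_le_add (hrankUT _) (hrankS1 _ _)
      _ ≤ 2 * r := by omega
  -- RIP bilinear bounds
  have hGY := rip_bilinear hRIP Eᵀ Y hrank1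
  have hGS : ∀ j : Fin n,
      |mip Eᵀ (S j) - (1 / (m : ℝ)) * ∑ i, mip (A i) Eᵀ * mip (A i) (S j)|
        ≤ δ * frob Eᵀ := by
    intro j
    have := rip_bilinear hRIP Eᵀ (S j) (hrank2 j)
    rwa [hfrobS j, mul_one] at this
  -- decomposition of Xstar - Xr
  have hMsum : Xstar - Xr = ∑ j, d j • S j := by
    rw [hM_eq]
    ext a b
    simp only [Matrix.sum_apply, Matrix.smul_apply, smul_eq_mul, hSapp,
      Matrix.mul_apply, Matrix.mul_diagonal, Matrix.transpose_apply]
    refine Finset.sum_congr rfl fun j _ => ?_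
    rw [Finset.sum_eq_single j (fun x _ hx => by rw [Matrix.diagonal_apply_ne d hx, mul_zero])
      (fun h => absurd (Finset.mem_univ j) h)]
    rw [Matrix.diagonal_apply_eq]
    ring
  -- decomposition of the bilinear error term over rank-one pieces
  have hmipM : ∀ B : Matrix (Fin n) (Fin n) ℝ,
      mip B (Xstar - Xr) = ∑ j, d j * mip B (S j) := by
    intro B
    rw [hMsum, mip_sum_right]
    exact Finset.sum_congr rfl fun j _ => mip_smul_right _ _ _
  have hswap : ∑ i, mip (A i) Eᵀ * mip (A i) (Xstar - Xr)
      = ∑ j, d j * ∑ i, mip (A i) Eᵀ * mip (A i) (S j) := by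
    simp only [hmipM, Finset.mul_sum]
    rw [Finset.sum_comm]
    exact Finset.sum_congr rfl fun j _ => Finset.sum_congr rfl fun i _ => by ring
  have hGM : mip Eᵀ (Xstar - Xr)
        - (1 / (m : ℝ)) * ∑ i, mip (A i) Eᵀ * mip (A i) (Xstar - Xr)
      = ∑ j, d j * (mip Eᵀ (S j)
        - (1 / (m : ℝ)) * ∑ i, mip (A i) Eᵀ * mip (A i) (S j)) := by
    rw [hmipM Eᵀ, hswap, Finset.mul_sum, ← Finset.sum_sub_distrib]
    exact Finset.sum_congr rfl fun j _ => by ring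
  have habsGM : |mip Eᵀ (Xstar - Xr)
        - (1 / (m : ℝ)) * ∑ i, mip (A i) Eᵀ * mip (A i) (Xstar - Xr)|
      ≤ δ * frob Eᵀ * ∑ j, d j := by
    rw [hGM]
    calc |∑ j, d j * (mip Eᵀ (S j)
          - (1 / (m : ℝ)) * ∑ i, mip (A i) Eᵀ * mip (A i) (S j))|
        ≤ ∑ j, |d j * (mip Eᵀ (S j)
          - (1 / (m : ℝ)) * ∑ i, mip (A i) Eᵀ * mip (A i) (S j))| :=
          Finset.abs_sum_le_sum_abs _ _
      _ ≤ ∑ j, d j * (δ * frob Eᵀ) := by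
          refine Finset.sum_le_sum fun j _ => ?_
          rw [abs_mul, abs_of_nonneg (hd0 j)]
          exact mul_le_mul_of_nonneg_left (hGS j) (hd0 j)
      _ = δ * frob Eᵀ * ∑ j, d j := by rw [← Finset.sum_mul]; ring
  -- nuclear norm identification
  have hPSD : (Xstar - Xr).PosSemidef := by
    rw [hM_eq]
    have hdiag : (Matrix.diagonal d).PosSemidef := Matrix.posSemidef_diagonal_iff.mpr hd0
    have := hdiag.mul_mul_conjTranspose_same Q
    simpa using this
  have htrM : (Xstar - Xr).trace = ∑ j, d j := by
    rw [hM_eq, Matrix.trace_mul_cycle, hQ, Matrix.one_mul, Matrix.trace_diagonal]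
  have hnuc : nuclearNorm (Xstar - Xr) = ∑ j, d j := by
    rw [nuclearNorm_eq_trace hPSD, htrM]
  -- the central chain of identities
  have hYsym : Yᵀ = Y := by
    rw [hY, Matrix.transpose_sub, Matrix.transpose_mul, Matrix.transpose_transpose, hXr_sym]
  have hEY : mip E E = mip E Y := by
    have hsplit : E = Y + (Xr - P * Xr) := by rw [hE, hY]; abel
    have hz : mip E (Xr - P * Xr) = 0 := by
      rw [mip, Matrix.mul_sub, ← Matrix.mul_assoc, hETP]
      simp
    nth_rewrite 2 [hsplit]
    rw [mip_add_right, hz, add_zero]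
  have hEYT : mip E Y = mip Eᵀ Y := (mip_transp E Y hYsym).symm
  have hEMT : mip Eᵀ (Xstar - Xr) = mip E (Xstar - Xr) := mip_transp E _ hM_sym
  have hEPM : mip E (P * (Xstar - Xr)) = mip E (Xstar - Xr) := by
    rw [mip, mip, ← Matrix.mul_assoc, hETP]
  have hsplit2 : ∀ B : Matrix (Fin n) (Fin n) ℝ,
      mip B Y = mip B (U * Uᵀ - Xstar) + mip B (Xstar - Xr) := by
    intro B
    rw [← mip_add_right]
    congr 1
    rw [hY]
    abel
  have hwsum : (1 / (m : ℝ)) * ∑ i, mip (A i) Eᵀ * mip (A i) Y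
      = (1 / (m : ℝ)) * (∑ i, mip (A i) Eᵀ * mip (A i) (U * Uᵀ - Xstar))
        + (1 / (m : ℝ)) * ∑ i, mip (A i) Eᵀ * mip (A i) (Xstar - Xr) := by
    rw [← mul_add, ← Finset.sum_add_distrib]
    congr 1
    refine Finset.sum_congr rfl fun i _ => ?_
    rw [hsplit2 (A i)]
    ring
  have hEYsplit : mip Eᵀ Y = mip Eᵀ (U * Uᵀ - Xstar) + mip Eᵀ (Xstar - Xr) := hsplit2 Eᵀ
  have hzero' : (1 / (m : ℝ)) * ∑ i, mip (A i) Eᵀ * mip (A i) (U * Uᵀ - Xstar) = 0 := by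
    rw [hzero, mul_zero]
  -- stationarity kills the coupled term
  have hstatkill : mip Eᵀ (U * Uᵀ - Xstar)
      = (mip Eᵀ Y - (1 / (m : ℝ)) * ∑ i, mip (A i) Eᵀ * mip (A i) Y)
        - (mip Eᵀ (Xstar - Xr)
          - (1 / (m : ℝ)) * ∑ i, mip (A i) Eᵀ * mip (A i) (Xstar - Xr)) := by
    linarith [hwsum, hEYsplit, hzero']
  have hchain : mip E E
      = (mip Eᵀ Y - (1 / (m : ℝ)) * ∑ i, mip (A i) Eᵀ * mip (A i) Y)
        - (mip Eᵀ (Xstar - Xr)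
          - (1 / (m : ℝ)) * ∑ i, mip (A i) Eᵀ * mip (A i) (Xstar - Xr))
        + mip E (P * (Xstar - Xr)) := by
    rw [hEY, hEYT, hEYsplit, hstatkill]
    linarith [hEMT, hEPM]
  -- assembling the bounds
  have hfET : frob Eᵀ = frob E := frob_transpose E
  have hfPM : frob (P * (Xstar - Xr)) = frob ((Xstar - Xr) * P) := by
    rw [← frob_transpose (P * (Xstar - Xr)), Matrix.transpose_mul, hM_sym, hPsym]
  have h1 : mip Eᵀ Y - (1 / (m : ℝ)) * ∑ i, mip (A i) Eᵀ * mip (A i) Y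
      ≤ δ * frob E * frob Y := by
    rw [← hfET]
    exact le_trans (le_abs_self _) hGY
  have h2 : -(mip Eᵀ (Xstar - Xr)
      - (1 / (m : ℝ)) * ∑ i, mip (A i) Eᵀ * mip (A i) (Xstar - Xr))
      ≤ δ * frob E * ∑ j, d j := by
    rw [← hfET]
    exact le_trans (neg_le_abs _) habsGM
  have h3 : mip E (P * (Xstar - Xr)) ≤ frob E * frob ((Xstar - Xr) * P) := by
    rw [← hfPM]
    exact le_trans (le_abs_self _) (abs_mip_le _ _)
  have hmain : frob E ^ 2
      ≤ frob E * (δ * frob Y + frob ((Xstar - Xr) * P) + δ * ∑ j, d j) := by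
    rw [← mip_self, hchain]
    have hre : frob E * (δ * frob Y + frob ((Xstar - Xr) * P) + δ * ∑ j, d j)
        = δ * frob E * frob Y + frob E * frob ((Xstar - Xr) * P)
          + δ * frob E * ∑ j, d j := by ring
    rw [hre]
    linarith [h1, h2, h3]
  rw [hnuc]
  rcases eq_or_lt_of_le (frob_nonneg E) with h0 | h0
  · rw [← h0]
    have hdsum : 0 ≤ ∑ j, d j := Finset.sum_nonneg fun j _ => hd0 j
    have := mul_nonneg hδ0 (frob_nonneg Y)
    have := frob_nonneg ((Xstar - Xr) * P)
    have := mul_nonneg hδ0 hdsum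
    linarith
  · rw [pow_two] at hmain
    exact le_of_mul_le_mul_left hmain h0
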